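/- If f(i) = j for f = f_A as above (with j > i), then A_j appears with a nonzero coefficient in every expression of A_i as a linear combination of A_{i+1},…,A_j; consequently, max{i' ≤ j : A_j ∈ Span(A_{j−1}, A_{j−2}, …, A_{i'})} = i, i.e., the analogous 'reversed' function g built from right-to-left spans satisfies g(j) = i. -/

import Mathlib

/-- If `f(i) = j > i` where `f(i) = min{j ≥ i : v_i ∈ Span(v_{i+1},…,v_j)}`, then `v_j` appears
with nonzero coefficient in every expression of `v_i` as a linear combination of
`v_{i+1},…,v_j`; consequently `v_j ∈ Span(v_{j−1},…,v_i)`, `v_j ∉ Span(v_{j−1},…,v_{i+1})`,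
and `max{i' ≤ j : v_j ∈ Span(v_{j−1},…,v_{i'})} = i` (the reversed function satisfies
`g(j) = i`). -/
theorem stmt16 (M n : ℕ) (hM : 1 ≤ M) (hn : 1 ≤ n) (hMn : M ≤ n)
    (v : ℤ → (Fin M → ℂ))
    (hper : ∀ i : ℤ, v (i + n) = v i)
    (hspan : Submodule.span ℂ (Set.range v) = ⊤)
    (i j : ℤ) (hij : i < j)
    (hleast : IsLeast {j' : ℤ | i ≤ j' ∧ v i ∈ Submodule.span ℂ (v '' Set.Ioc i j')} j) :
    (∀ c : ℤ → ℂ, v i = ∑ k ∈ Finset.Icc (i + 1) j, c k • v k → c j ≠ 0) ∧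
    v j ∈ Submodule.span ℂ (v '' Set.Ico i j) ∧
    v j ∉ Submodule.span ℂ (v '' Set.Ioo i j) ∧
    IsGreatest {i' : ℤ | i' ≤ j ∧ v j ∈ Submodule.span ℂ (v '' Set.Ico i' j)} i := by
  obtain ⟨⟨hile, hmem⟩, hlb⟩ := hleast
  have hnot : v i ∉ Submodule.span ℂ (v '' Set.Ioo i j) := by
    intro h
    have heq : Set.Ioo i j = Set.Ioc i (j - 1) := by
      ext k; simp only [Set.mem_Ioo, Set.mem_Ioc]; omega
    rw [heq] at h
    have := hlb ⟨by omega, h⟩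
    omega
  have h1 : ∀ c : ℤ → ℂ, v i = ∑ k ∈ Finset.Icc (i + 1) j, c k • v k → c j ≠ 0 := by
    intro c hc hcj
    apply hnot
    have hins : Finset.Icc (i + 1) j = insert j (Finset.Icc (i + 1) (j - 1)) := by
      ext k; simp only [Finset.mem_Icc, Finset.mem_insert]; omega
    have hc' : v i = ∑ k ∈ Finset.Icc (i + 1) (j - 1), c k • v k := by
      rw [hc, hins, Finset.sum_insert (by simp only [Finset.mem_Icc]; omega), hcj,
        zero_smul, zero_add]
    rw [hc']
    refine Submodule.sum_mem _ fun k hk => Submodule.smul_mem _ _ (Submodule.subset_span ?_)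
    simp only [Finset.mem_Icc] at hk
    exact ⟨k, by simp only [Set.mem_Ioo]; omega, rfl⟩
  rw [Finsupp.mem_span_image_iff_linearCombination] at hmem
  obtain ⟨l, hl, hsum⟩ := hmem
  set c : ℤ → ℂ := fun k => l k with hcdef
  have hsub : l.support ⊆ Finset.Icc (i + 1) j := by
    intro k hk
    have := hl hk
    simp only [Set.mem_Ioc] at this
    simp only [Finset.mem_Icc]; omega
  have hrepr : v i = ∑ k ∈ Finset.Icc (i + 1) j, c k • v k := by
    show v i = ∑ k ∈ Finset.Icc (i + 1) j, l k • v k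
    rw [← hsum, Finsupp.linearCombination_apply, Finsupp.sum]
    refine (Finset.sum_subset (f := fun k => l k • v k) hsub fun k _ hk => ?_)
    simp only [Finsupp.notMem_support_iff.mp hk, zero_smul]
  have hcj : c j ≠ 0 := h1 c hrepr
  have hins : Finset.Icc (i + 1) j = insert j (Finset.Icc (i + 1) (j - 1)) := by
    ext k; simp only [Finset.mem_Icc, Finset.mem_insert]; omega
  have hsplit : v i = (∑ k ∈ Finset.Icc (i + 1) (j - 1), c k • v k) + c j • v j := by
    rw [hrepr, hins, Finset.sum_insert (by simp only [Finset.mem_Icc]; omega), add_comm]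
  have hvj : v j = (c j)⁻¹ • (v i - ∑ k ∈ Finset.Icc (i + 1) (j - 1), c k • v k) := by
    rw [hsplit]
    rw [add_sub_cancel_left, smul_smul, inv_mul_cancel₀ hcj, one_smul]
  have h2 : v j ∈ Submodule.span ℂ (v '' Set.Ico i j) := by
    rw [hvj]
    refine Submodule.smul_mem _ _ (Submodule.sub_mem _ ?_ ?_)
    · exact Submodule.subset_span ⟨i, ⟨le_refl i, hij⟩, rfl⟩
    · refine Submodule.sum_mem _ fun k hk => Submodule.smul_mem _ _ (Submodule.subset_span ?_)
      simp only [Finset.mem_Icc] at hk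
      exact ⟨k, by simp only [Set.mem_Ico]; omega, rfl⟩
  have h3 : v j ∉ Submodule.span ℂ (v '' Set.Ioo i j) := by
    intro h
    apply hnot
    rw [hsplit]
    refine Submodule.add_mem _ ?_ (Submodule.smul_mem _ _ h)
    refine Submodule.sum_mem _ fun k hk => Submodule.smul_mem _ _ (Submodule.subset_span ?_)
    simp only [Finset.mem_Icc] at hk
    exact ⟨k, by simp only [Set.mem_Ioo]; omega, rfl⟩
  refine ⟨h1, h2, h3, ⟨hij.le, h2⟩, ?_⟩
  intro i' hi'
  obtain ⟨hi'j, hi'mem⟩ := hi'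
  by_contra hgt
  push_neg at hgt
  apply h3
  refine Submodule.span_mono (Set.image_mono (f := v) ?_) hi'mem
  intro k hk
  simp only [Set.mem_Ico] at hk
  simp only [Set.mem_Ioo]
  omega
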